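/- arXiv:1501.01712 — 2 statements merged into one kernel-verified Lean document; each statement's English description precedes it below -/
import Mathlib

section
/- Let E be a row-finite directed graph with no sources, n ≥ 1, and v, w vertices of E (regarded as length-zero vertices of E(n)). Then there is a path in E(n) from w to v if and only if there is a path in E from w to v whose length is a multiple of n. -/
/-- A directed graph: vertices, edges, range and source maps. -/
structure DGraph where
  V : Type
  E : Type
  r : E → V
  s : E → V

namespace DGraph

variable {G : DGraph}

/-- A path in a directed graph: a word of composable edges together with a source vertex
(so that length-zero paths are vertices). -/
structure Path (G : DGraph) where
  src : G.V
  edges : List G.E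
  chain : List.Chain' (fun a b => G.s a = G.r b) edges
  srcEq : ∀ a ∈ edges.getLast?, G.s a = src

/-- The range of a path. -/
def Path.rng (p : G.Path) : G.V := p.edges.head?.elim p.src G.r

/-- The length of a path. -/
def Path.length (p : G.Path) : ℕ := p.edges.length

/-- The length-zero path at a vertex. -/
def Path.nil (G : DGraph) (v : G.V) : G.Path :=
  ⟨v, [], List.isChain_nil, by simp⟩

@[simp] theorem Path.length_nil (v : G.V) : (Path.nil G v).length = 0 := rfl

/-- Prepend an edge to a path. -/
def Path.cons (e : G.E) (p : G.Path) (h : p.rng = G.s e) : G.Path where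
  src := p.src
  edges := e :: p.edges
  chain := by
    rw [List.Chain', List.isChain_cons]
    refine ⟨fun b hb => ?_, p.chain⟩
    rw [← h]
    simp [Path.rng, Option.mem_def.mp hb]
  srcEq := by
    intro a ha
    cases hp : p.edges with
    | nil =>
      rw [hp] at ha
      simp only [List.getLast?_singleton, Option.mem_def, Option.some.injEq] at ha
      subst ha
      have h0 : p.rng = p.src := by simp [Path.rng, hp]
      rw [← h, h0]
    | cons f t =>
      apply p.srcEq
      rw [hp]
      rw [hp, List.getLast?_cons_cons] at ha
      exact ha

@[simp] theorem Path.length_cons (e : G.E) (p : G.Path) (h : p.rng = G.s e) :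
    (Path.cons e p h).length = p.length + 1 := rfl

/-- Remove the first edge of a path. -/
def Path.tail (p : G.Path) : G.Path where
  src := p.src
  edges := p.edges.tail
  chain := p.chain.tail
  srcEq := by
    intro a ha
    apply p.srcEq
    cases hp : p.edges with
    | nil => rw [hp] at ha; simp at ha
    | cons f t =>
      rw [hp] at ha
      simp only [List.tail_cons] at ha
      cases t with
      | nil => simp at ha
      | cons g u => rw [List.getLast?_cons_cons]; exact ha

@[simp] theorem Path.length_tail (p : G.Path) : p.tail.length = p.length - 1 := by
  simp [Path.tail, Path.length]

/-- The initial segment of a path consisting of its first `k` edges. -/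
def Path.take (p : G.Path) (k : ℕ) : G.Path where
  src := (p.edges.drop k).head?.elim p.src G.r
  edges := p.edges.take k
  chain := p.chain.take k
  srcEq := by
    intro a ha
    have hc : List.Chain' (fun a b => G.s a = G.r b) (p.edges.take k ++ p.edges.drop k) := by
      rw [List.take_append_drop]; exact p.chain
    rw [List.Chain', List.isChain_append] at hc
    obtain ⟨-, -, hadj⟩ := hc
    cases hd : p.edges.drop k with
    | nil =>
      have htake : p.edges.take k = p.edges := by
        have h1 := List.take_append_drop k p.edges
        rw [hd, List.append_nil] at h1
        exact h1
      simp only [List.head?_nil, Option.elim]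
      exact p.srcEq a (htake ▸ ha)
    | cons f t =>
      simp only [List.head?_cons, Option.elim]
      exact hadj a ha f (by rw [hd]; simp)

/-- `[μ]_n` : the initial segment of `μ` of length `|μ| mod n`. -/
def Path.trunc (m : ℕ) (p : G.Path) : G.Path := p.take (p.length % m)

/-- Concatenation of paths, `p` followed after `q` (so `p.append q` has range the range of `p`
and source the source of `q`). -/
def Path.append (p q : G.Path) (h : p.src = q.rng) : G.Path where
  src := q.src
  edges := p.edges ++ q.edges
  chain := by
    rw [List.Chain', List.isChain_append]
    refine ⟨p.chain, q.chain, fun a ha b hb => ?_⟩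
    rw [p.srcEq a ha, h]
    simp [Path.rng, Option.mem_def.mp hb]
  srcEq := by
    intro a ha
    cases hq : q.edges with
    | nil =>
      rw [hq, List.append_nil] at ha
      have h0 : q.rng = q.src := by simp [Path.rng, hq]
      rw [p.srcEq a ha, h, h0]
    | cons f t =>
      apply q.srcEq
      rw [hq]
      rw [hq, List.getLast?_append_cons] at ha
      exact ha

/-- A graph is row-finite if every vertex receives finitely many edges. -/
def RowFinite (G : DGraph) : Prop := ∀ v : G.V, {e : G.E | G.r e = v}.Finite

/-- A graph has no sources if every vertex receives an edge. -/
def NoSources (G : DGraph) : Prop := ∀ v : G.V, ∃ e : G.E, G.r e = v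

/-- A graph is strongly connected if for all vertices `v, w` there is a path from `w` to `v`. -/
def StronglyConnected (G : DGraph) : Prop :=
  ∀ v w : G.V, ∃ p : G.Path, p.src = w ∧ p.rng = v

/-- The set of paths of length less than `n`. -/
abbrev PathLt (G : DGraph) (n : ℕ) := {p : G.Path // p.length < n}

/-- The graph `E(n)` of Kribs and Solel: vertices are paths of length `< n`, and edges
are pairs `(e, μ)` with `r(μ) = s(e)` and `|μ| < n`, with source `μ` and range `[eμ]_n`. -/
def Eln (G : DGraph) (n : ℕ) : DGraph where
  V := PathLt G n
  E := {q : G.E × G.Path // q.2.length + 1 ≤ n ∧ q.2.rng = G.s q.1}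
  s := fun q => ⟨q.1.2, Nat.lt_of_succ_le q.2.1⟩
  r := fun q =>
    if h : q.1.2.length + 1 < n then
      ⟨Path.cons q.1.1 q.1.2 q.2.2, by simpa using h⟩
    else
      ⟨Path.nil G (G.r q.1.1), Nat.lt_of_lt_of_le (Nat.succ_pos _) q.2.1⟩

/-- A vertex of `E`, regarded as a length-zero vertex of `E(n)`. -/
def vtx (G : DGraph) (n : ℕ) (hn : 0 < n) (v : G.V) : PathLt G n :=
  ⟨Path.nil G v, by simpa using hn⟩

/-- `d` is the greatest common divisor of the set `S` of natural numbers. -/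
def IsGCDOf (d : ℕ) (S : Set ℕ) : Prop :=
  (∀ k ∈ S, d ∣ k) ∧ ∀ c : ℕ, (∀ k ∈ S, c ∣ k) → c ∣ d

/-- The set of lengths of (nonempty) cycles of `G`. -/
def CycleLengths (G : DGraph) : Set ℕ :=
  {k | ∃ p : G.Path, p.rng = p.src ∧ p.edges ≠ [] ∧ p.length = k}

/-- The set of lengths of (nonempty) cycles of `G` based at `v`. -/
def CycleLengthsAt (G : DGraph) (v : G.V) : Set ℕ :=
  {k | ∃ p : G.Path, p.src = v ∧ p.rng = v ∧ p.edges ≠ [] ∧ p.length = k}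

/-- The relation `v ∼ w` iff there is a path from `w` to `v` whose length is divisible by `d`. -/
def SimRel (G : DGraph) (d : ℕ) (v w : G.V) : Prop :=
  ∃ p : G.Path, p.src = w ∧ p.rng = v ∧ d ∣ p.length

/-- The connected-component relation of a graph: the smallest equivalence relation
identifying the range and the source of each edge. -/
def Comp (G : DGraph) : G.V → G.V → Prop :=
  Relation.EqvGen (fun a b => ∃ f : G.E, G.r f = a ∧ G.s f = b)

/-- The adjacency matrix of `E(n)` acting on vectors indexed by `E^{<n}`. -/
noncomputable def Aact (G : DGraph) (n : ℕ) (g : PathLt G n → ℝ) (v : PathLt G n) : ℝ :=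
  ∑ᶠ (f : (Eln G n).E) (_ : (Eln G n).r f = v), g ((Eln G n).s f)

/-- The pushforward of a vector on `E^{<n}` along `ν ↦ [ν]_m`. -/
noncomputable def pushf (G : DGraph) (n m : ℕ) (g : PathLt G n → ℝ) (μ : PathLt G m) : ℝ :=
  ∑ᶠ (ν : PathLt G n) (_ : Path.trunc m ν.1 = μ.1), g ν

instance : TopologicalSpace G.Path := ⊥

/-- The inverse limit `lim← E^{<n_k}` along the truncation maps. -/
def InvLim (G : DGraph) (n : ℕ → ℕ) : Type :=
  {f : (k : ℕ) → PathLt G (n k) // ∀ k, Path.trunc (n k) (f (k+1)).1 = (f k).1}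

instance (G : DGraph) (n : ℕ → ℕ) : TopologicalSpace (InvLim G n) :=
  inferInstanceAs (TopologicalSpace
    {f : (k : ℕ) → PathLt G (n k) // ∀ k, Path.trunc (n k) (f (k+1)).1 = (f k).1})

noncomputable instance (G : DGraph) (n : ℕ → ℕ) : MeasurableSpace (InvLim G n) := borel _

theorem Path.ext' {p q : G.Path} (h1 : p.src = q.src) (h2 : p.edges = q.edges) : p = q := by
  cases p; cases q; cases h1; cases h2; rfl

theorem Path.take_zero' (p : G.Path) : p.take 0 = Path.nil G p.rng := by
  apply Path.ext' <;> simp [Path.take, Path.nil, Path.rng]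

theorem Path.rng_take (p : G.Path) (k : ℕ) : (p.take k).rng = p.rng := by
  cases k with
  | zero => rw [take_zero']; rfl
  | succ k =>
    cases hp : p.edges with
    | nil => simp [Path.take, Path.rng, hp]
    | cons a l => simp [Path.take, Path.rng, hp]

theorem Path.length_trunc (n : ℕ) (p : G.Path) :
    (Path.trunc n p).length = p.length % n := by
  simp [Path.trunc, Path.take, Path.length, Nat.min_eq_left (Nat.mod_le _ _)]

theorem Path.rng_trunc (n : ℕ) (p : G.Path) : (Path.trunc n p).rng = p.rng :=
  rng_take p _

theorem Path.rng_cons (e : G.E) (p : G.Path) (h : p.rng = G.s e) :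
    (Path.cons e p h).rng = G.r e := rfl

theorem Path.trunc_nil (n : ℕ) (v : G.V) :
    Path.trunc n (Path.nil G v) = Path.nil G v := by
  have h0 : (Path.nil G v).length % n = 0 := by simp
  rw [Path.trunc, h0, take_zero']; rfl

theorem Path.tail_rng_eq {p : G.Path} {e : G.E} {rest : List G.E}
    (hpe : p.edges = e :: rest) : p.tail.rng = G.s e := by
  cases rest with
  | nil =>
    have h1 := p.srcEq e (by rw [hpe]; rfl)
    have h2 : p.tail.rng = p.src := by simp [Path.tail, Path.rng, hpe]
    rw [h2, h1]
  | cons g t =>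
    have hc := p.chain
    rw [hpe, List.Chain', List.isChain_cons_cons] at hc
    have h2 : p.tail.rng = G.r g := by simp [Path.tail, Path.rng, hpe]
    rw [h2, hc.1]

theorem eln_r_eq {n : ℕ} (hn : 0 < n) (e : G.E) (p : G.Path)
    (hle : (Path.trunc n p).length + 1 ≤ n)
    (hrng : (Path.trunc n p).rng = G.s e) (hr : p.rng = G.s e) :
    ((Eln G n).r ⟨(e, Path.trunc n p), hle, hrng⟩).1
      = Path.trunc n (Path.cons e p hr) := by
  dsimp only [Eln]
  split_ifs with h
  · have h' : p.edges.length % n + 1 < n := by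
      rwa [Path.length_trunc] at h
    have hmod : (p.edges.length + 1) % n = p.edges.length % n + 1 := by
      rw [Nat.add_mod, Nat.mod_eq_of_lt (by omega : 1 < n),
        Nat.mod_eq_of_lt h']
    apply Path.ext'
    · show (Path.trunc n p).src = _
      simp [Path.trunc, Path.take, Path.cons, Path.length, hmod]
    · simp [Path.cons, Path.trunc, Path.take, Path.length, hmod]
  · have hk : p.length % n + 1 = n := by
      have h1 : (Path.trunc n p).length + 1 ≤ n := hle
      rw [Path.length_trunc] at h1 h
      omega
    have hdvd : n ∣ p.length + 1 := by
      refine ⟨p.length / n + 1, ?_⟩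
      have h2 := Nat.div_add_mod p.length n
      rw [Nat.mul_add, Nat.mul_one]
      omega
    have hmod0 : (Path.cons e p hr).length % n = 0 := by
      show (p.length + 1) % n = 0
      obtain ⟨c, hc⟩ := hdvd
      rw [hc]
      exact Nat.mul_mod_right n c
    rw [show Path.trunc n (Path.cons e p hr)
          = (Path.cons e p hr).take ((Path.cons e p hr).length % n) from rfl,
      hmod0, Path.take_zero', Path.rng_cons]

theorem forward_aux {n : ℕ} (hn : 0 < n) (w : G.V) :
    ∀ (L : List (Eln G n).E) (P : Path (Eln G n)), P.edges = L →
    P.src = vtx G n hn w →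
    ∃ p : G.Path, p.src = w ∧ p.length = P.length ∧ (P.rng).1 = Path.trunc n p
  | [], P, hPe, hPs => by
    refine ⟨Path.nil G w, rfl, by simp [Path.length, Path.nil, hPe], ?_⟩
    rw [Path.trunc_nil]
    have h1 : P.rng = P.src := by simp [Path.rng, hPe]
    rw [h1, hPs]; rfl
  | ⟨⟨e, μ⟩, hle, hrng⟩ :: rest, P, hPe, hPs => by
    obtain ⟨p', hp's, hp'len, hp'r⟩ :=
      forward_aux hn w rest P.tail (by simp [Path.tail, hPe]; rfl) hPs
    have hsf : (Eln G n).s ⟨⟨e, μ⟩, hle, hrng⟩ = P.tail.rng :=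
      (Path.tail_rng_eq hPe).symm
    have hμ : μ = Path.trunc n p' := by
      have h1 := congrArg Subtype.val hsf
      exact h1.trans hp'r
    subst hμ
    have hr : p'.rng = G.s e := by rw [← Path.rng_trunc n p']; exact hrng
    refine ⟨Path.cons e p' hr, hp's, ?_, ?_⟩
    · show p'.length + 1 = P.length
      rw [hp'len]
      simp [Path.length, Path.tail, hPe]
      rfl
    · have h1 : P.rng = (Eln G n).r ⟨⟨e, Path.trunc n p'⟩, hle, hrng⟩ := by
        simp [Path.rng, hPe]
        rfl
      rw [h1, eln_r_eq hn e p' hle hrng hr]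

theorem backward_aux {n : ℕ} (hn : 0 < n) :
    ∀ (L : List G.E) (p : G.Path), p.edges = L →
    ∃ P : Path (Eln G n), P.src = vtx G n hn p.src ∧ P.length = p.length ∧
      (P.rng).1 = Path.trunc n p
  | [], p, hpe => by
    refine ⟨Path.nil (Eln G n) (vtx G n hn p.src), rfl,
      by simp [Path.length, Path.nil, hpe], ?_⟩
    have hp : p = Path.nil G p.src := Path.ext' rfl hpe
    have h2 : Path.trunc n p = Path.nil G p.src := by
      conv_lhs => rw [hp]
      rw [Path.trunc_nil]
    rw [h2]; rfl
  | e :: rest, p, hpe => by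
    obtain ⟨P', hP's, hP'len, hP'r⟩ :=
      backward_aux hn rest p.tail (by simp [Path.tail, hpe])
    have hr' : p.tail.rng = G.s e := Path.tail_rng_eq hpe
    have hpc : Path.cons e p.tail hr' = p :=
      Path.ext' rfl (by simp [Path.cons, Path.tail, hpe])
    have hle : (Path.trunc n p.tail).length + 1 ≤ n := by
      rw [Path.length_trunc]; exact Nat.mod_lt _ hn
    have hFr : (Path.trunc n p.tail).rng = G.s e := by
      rw [Path.rng_trunc]; exact hr'
    have hcond : P'.rng = (Eln G n).s ⟨(e, Path.trunc n p.tail), hle, hFr⟩ :=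
      Subtype.ext hP'r
    refine ⟨Path.cons ⟨(e, Path.trunc n p.tail), hle, hFr⟩ P' hcond, hP's, ?_, ?_⟩
    · show P'.length + 1 = p.length
      rw [hP'len]
      simp [Path.length, Path.tail, hpe]
    · show ((Eln G n).r ⟨(e, Path.trunc n p.tail), hle, hFr⟩).1 = Path.trunc n p
      rw [eln_r_eq hn e p.tail hle hFr hr', hpc]

end DGraph

open DGraph in
/-- For a row-finite directed graph `E` with no sources, `n ≥ 1` and
vertices `v, w` of `E` (regarded as length-zero vertices of `E(n)`), there is a path in
`E(n)` from `w` to `v` if and only if there is a path in `E` from `w` to `v` whose length is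
a multiple of `n`. -/
theorem Eln_connectivity (G : DGraph) (hrf : RowFinite G) (hns : NoSources G)
    (n : ℕ) (hn : 0 < n) (v w : G.V) :
    (∃ P : Path (Eln G n), P.src = vtx G n hn w ∧ P.rng = vtx G n hn v) ↔
    (∃ p : G.Path, p.src = w ∧ p.rng = v ∧ n ∣ p.length) := by
  constructor
  · rintro ⟨P, hs, hr⟩
    obtain ⟨p, hps, hplen, hpr⟩ := forward_aux hn w P.edges P rfl hs
    have h1 : Path.trunc n p = Path.nil G v := by
      rw [← hpr, hr]; rfl
    have hlen0 : p.length % n = 0 := by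
      have := congrArg Path.length h1
      rwa [Path.length_trunc] at this
    have h2 : Path.trunc n p = Path.nil G p.rng := by
      rw [show Path.trunc n p = p.take (p.length % n) from rfl, hlen0, Path.take_zero']
    refine ⟨p, hps, ?_, Nat.dvd_of_mod_eq_zero hlen0⟩
    have h3 : Path.nil G p.rng = Path.nil G v := h2 ▸ h1
    exact congrArg Path.src h3
  · rintro ⟨p, hps, hpr, hdvd⟩
    obtain ⟨P, hPs, hPlen, hPr⟩ := backward_aux (G := G) hn p.edges p rfl
    refine ⟨P, by rw [hPs, hps], ?_⟩
    apply Subtype.ext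
    have hlen0 : p.length % n = 0 := by
      obtain ⟨c, hc⟩ := hdvd; rw [hc]; exact Nat.mul_mod_right n c
    rw [hPr, show Path.trunc n p = p.take (p.length % n) from rfl, hlen0, Path.take_zero', hpr]
    rfl
end

section
/- Let E be a strongly connected finite directed graph with no sources, n ≥ 1, ρ the Perron–Frobenius eigenvalue (spectral radius) of the adjacency matrix A_E, and x the corresponding positive eigenvector. Then the vector m on E^{<n} defined by m(μ) = (1/n)·ρ^{−|μ|}·x_{s(μ)} is a positive eigenvector of the adjacency matrix A_n of E(n) with eigenvalue ρ. -/
section Aux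

open DGraph Finset

variable {G : DGraph}

theorem DGraph.Path.ext'_s15 {p q : G.Path} (h1 : p.src = q.src) (h2 : p.edges = q.edges) :
    p = q := by
  cases p; cases q; simp_all

theorem pathLt_finite (G : DGraph) [Finite G.V] [Finite G.E] (n : ℕ) : Finite (PathLt G n) := by
  have : Finite (Option G.E) := Finite.of_equiv _ (Equiv.optionEquivSumPUnit.{0,0} G.E).symm
  apply Finite.of_injective
    (fun p : PathLt G n => (p.1.src, fun i : Fin n => p.1.edges[(i : ℕ)]?))
  intro p q h
  simp only [Prod.mk.injEq] at h
  obtain ⟨h1, h2⟩ := h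
  refine Subtype.ext (DGraph.Path.ext'_s15 h1 (List.ext_getElem? fun i => ?_))
  by_cases hi : i < n
  · exact congrFun h2 ⟨i, hi⟩
  · rw [List.getElem?_eq_none, List.getElem?_eq_none]
    · exact le_trans (le_of_lt q.2) (not_lt.1 hi)
    · exact le_trans (le_of_lt p.2) (not_lt.1 hi)

theorem elnE_finite (G : DGraph) [Finite G.V] [Finite G.E] (n : ℕ) : Finite ((Eln G n).E) := by
  have := pathLt_finite G n
  apply Finite.of_injective
    (fun f : (Eln G n).E =>
      ((f.1.1, ⟨f.1.2, Nat.lt_of_succ_le f.2.1⟩) : G.E × PathLt G n))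
  intro f g h
  simp only [Prod.mk.injEq, Subtype.mk.injEq] at h
  exact Subtype.ext (Prod.ext h.1 h.2)

theorem head_eq_of {α : Type*} (l : List α) (e : α) (t : List α) (he : l = e :: t)
    (h : l ≠ []) : l.head h = e := by
  rw [List.head_eq_iff_head?_eq_some, he]; rfl

theorem rng_tail (p : G.Path) (e : G.E) (t : List G.E) (he : p.edges = e :: t) :
    p.tail.rng = G.s e := by
  have hch := p.chain
  rw [he] at hch
  cases t with
  | nil =>
    have hs := p.srcEq e (by rw [he]; simp)
    simp [DGraph.Path.tail, DGraph.Path.rng, he, hs]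
  | cons f u =>
    rw [List.Chain', List.isChain_cons_cons] at hch
    simp [DGraph.Path.tail, DGraph.Path.rng, he, hch.1.symm]

theorem cons_tail (p : G.Path) (e : G.E) (t : List G.E) (he : p.edges = e :: t)
    (h : p.tail.rng = G.s e) : DGraph.Path.cons e p.tail h = p :=
  DGraph.Path.ext'_s15 rfl (by simp [DGraph.Path.cons, DGraph.Path.tail, he])

theorem tail_cons (e : G.E) (q : G.Path) (h : q.rng = G.s e) :
    (DGraph.Path.cons e q h).tail = q :=
  DGraph.Path.ext'_s15 rfl rfl

theorem rng_cons (e : G.E) (q : G.Path) (h : q.rng = G.s e) :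
    (DGraph.Path.cons e q h).rng = G.r e := rfl

open scoped Classical in
theorem sum_paths (G : DGraph) [Fintype G.E] (n : ℕ) [Fintype (PathLt G n)]
    (ρ : ℝ) (x : G.V → ℝ)
    (heig : ∀ v, ∑ e ∈ univ.filter (fun e => G.r e = v), x (G.s e) = ρ * x v) :
    ∀ (k : ℕ), k < n → ∀ w : G.V,
      ∑ p ∈ univ.filter (fun p : PathLt G n => p.1.length = k ∧ p.1.rng = w), x p.1.src
        = ρ ^ k * x w := by
  classical
  intro k
  induction k with
  | zero =>
    intro hk w
    have hset : univ.filter (fun p : PathLt G n => p.1.length = 0 ∧ p.1.rng = w)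
        = {⟨DGraph.Path.nil G w, hk⟩} := by
      ext p
      simp only [mem_filter, mem_univ, true_and, mem_singleton]
      constructor
      · rintro ⟨h1, h2⟩
        have he : p.1.edges = [] := List.length_eq_zero_iff.1 h1
        have hr : p.1.rng = p.1.src := by simp [DGraph.Path.rng, he]
        have hsrc : p.1.src = w := by rw [← h2, hr]
        refine Subtype.ext (DGraph.Path.ext'_s15 ?_ ?_)
        · simpa [DGraph.Path.nil] using hsrc
        · simp [he, DGraph.Path.nil]
      · rintro rfl; exact ⟨rfl, rfl⟩
    rw [hset]
    simp [DGraph.Path.nil]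
  | succ k ih =>
    intro hk w
    have hk' : k < n := Nat.lt_of_succ_lt hk
    have key : ∑ p ∈ univ.filter (fun p : PathLt G n => p.1.length = k + 1 ∧ p.1.rng = w),
          x p.1.src
        = ∑ z ∈ (univ.filter (fun e : G.E => G.r e = w)).sigma
            (fun e => univ.filter (fun q : PathLt G n => q.1.length = k ∧ q.1.rng = G.s e)),
          x z.2.1.src := by
      apply Finset.sum_bij'
        (i := fun (p : PathLt G n) hp =>
          (⟨p.1.edges.head (by
              have : p.1.length = k + 1 := (Finset.mem_filter.1 hp).2.1
              intro hnil
              simp [DGraph.Path.length, hnil] at this),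
            ⟨p.1.tail, by
              have h2 := p.2
              simp only [DGraph.Path.length_tail]
              omega⟩⟩ : Σ _ : G.E, PathLt G n))
        (j := fun z hz =>
          ⟨DGraph.Path.cons z.1 z.2.1 (Finset.mem_filter.1 (Finset.mem_sigma.1 hz).2).2.2,
            by
              have h1 := (Finset.mem_filter.1 (Finset.mem_sigma.1 hz).2).2.1
              simp only [DGraph.Path.length_cons]
              omega⟩)
      case hi =>
        intro p hp
        obtain ⟨-, hlen, hrng⟩ := Finset.mem_filter.1 hp
        obtain ⟨e, t, he⟩ : ∃ e t, p.1.edges = e :: t := by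
          cases hpe : p.1.edges with
          | nil => simp [DGraph.Path.length, hpe] at hlen
          | cons a b => exact ⟨a, b, rfl⟩
        rw [Finset.mem_sigma]
        constructor
        · simp only [Finset.mem_filter, Finset.mem_univ, true_and]
          rw [head_eq_of p.1.edges e t he]
          simpa [DGraph.Path.rng, he] using hrng
        · simp only [Finset.mem_filter, Finset.mem_univ, true_and]
          refine ⟨?_, ?_⟩
          · simp only [DGraph.Path.length_tail, hlen]; omega
          · rw [head_eq_of p.1.edges e t he]
            exact rng_tail p.1 e t he
      case hj =>
        intro z hz
        obtain ⟨hz1, hz2⟩ := Finset.mem_sigma.1 hz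
        obtain ⟨-, hq1, hq2⟩ := Finset.mem_filter.1 hz2
        simp only [Finset.mem_filter, Finset.mem_univ, true_and]
        constructor
        · simp [DGraph.Path.length_cons, hq1]
        · rw [rng_cons]
          exact (Finset.mem_filter.1 hz1).2
      case left_neg =>
        intro p hp
        apply Subtype.ext
        apply DGraph.Path.ext'_s15
        · rfl
        · exact List.cons_head_tail _
      case right_neg =>
        intro z hz
        apply Sigma.ext
        · simp [DGraph.Path.cons]
        · apply heq_of_eq
          apply Subtype.ext
          exact tail_cons _ _ ((Finset.mem_filter.1 (Finset.mem_sigma.1 hz).2).2.2)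
      case h =>
        intro p hp
        rfl
    rw [key, Finset.sum_sigma]
    have : ∀ e ∈ univ.filter (fun e : G.E => G.r e = w),
        ∑ q ∈ univ.filter (fun q : PathLt G n => q.1.length = k ∧ q.1.rng = G.s e), x q.1.src
          = ρ ^ k * x (G.s e) := fun e _ => ih hk' (G.s e)
    rw [Finset.sum_congr rfl this, ← Finset.mul_sum, heig w]
    ring

end Aux

open DGraph in
/-- Let `E` be a strongly connected finite directed graph with no sources,
`n ≥ 1`, `ρ` the Perron–Frobenius eigenvalue of `A_E` and `x` the corresponding positive
eigenvector.  The vector `m(μ) = (1/n)·ρ^{−|μ|}·x_{s(μ)}` on `E^{<n}` is a positive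
eigenvector of the adjacency matrix `A_n` of `E(n)` with eigenvalue `ρ`. -/
theorem Aact_perron_eigenvector (G : DGraph) [Finite G.V] [Finite G.E]
    (hsc : StronglyConnected G) (hns : NoSources G) (n : ℕ) (hn : 0 < n)
    (ρ : ℝ) (hρ : 0 < ρ) (x : G.V → ℝ) (hx : ∀ v, 0 < x v)
    (heig : ∀ v, ∑ᶠ (e : G.E) (_ : G.r e = v), x (G.s e) = ρ * x v) :
    (∀ p : PathLt G n, 0 < (1 / (n : ℝ)) * ρ ^ (-(p.1.length : ℤ)) * x p.1.src) ∧
    (∀ p : PathLt G n,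
      Aact G n (fun q : PathLt G n => (1 / (n : ℝ)) * ρ ^ (-(q.1.length : ℤ)) * x q.1.src) p
        = ρ * ((1 / (n : ℝ)) * ρ ^ (-(p.1.length : ℤ)) * x p.1.src)) := by
  classical
  have hPfin : Finite (PathLt G n) := pathLt_finite G n
  have hEfin : Finite ((Eln G n).E) := elnE_finite G n
  letI : Fintype (PathLt G n) := Fintype.ofFinite _
  letI : Fintype ((Eln G n).E) := Fintype.ofFinite _
  letI : Fintype G.E := Fintype.ofFinite _
  have hρ0 : ρ ≠ 0 := ne_of_gt hρ
  have hn0 : (0:ℝ) < (n:ℝ) := by exact_mod_cast hn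
  constructor
  · intro p
    have h1 := hx p.1.src
    have h2 : (0:ℝ) < ρ ^ (-(p.1.length : ℤ)) := zpow_pos hρ _
    positivity
  intro p
  have heig' : ∀ v, ∑ e ∈ Finset.univ.filter (fun e => G.r e = v), x (G.s e) = ρ * x v := by
    intro v
    rw [← heig v]
    exact (finsum_cond_eq_sum_of_cond_iff _ (fun {e} _ => by simp)).symm
  have hAact : Aact G n
        (fun q : PathLt G n => (1 / (n : ℝ)) * ρ ^ (-(q.1.length : ℤ)) * x q.1.src) p
      = ∑ f ∈ Finset.univ.filter (fun f => (Eln G n).r f = p),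
          (1 / (n : ℝ)) * ρ ^ (-(((Eln G n).s f).1.length : ℤ)) * x ((Eln G n).s f).1.src :=
    finsum_cond_eq_sum_of_cond_iff _ (fun {f} _ => by simp)
  rw [hAact]
  cases hpe : p.1.edges with
  | cons e t =>
    have hL1 : 1 ≤ p.1.length := by simp [DGraph.Path.length, hpe]
    have hle : p.1.tail.length + 1 ≤ n := by
      have h2 := p.2
      simp only [DGraph.Path.length_tail]
      omega
    have hlt : p.1.tail.length + 1 < n := by
      have h2 := p.2
      simp only [DGraph.Path.length_tail]
      omega
    have hfilter : Finset.univ.filter (fun f => (Eln G n).r f = p)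
        = @singleton (Eln G n).E (Finset (Eln G n).E) _ ⟨(e, p.1.tail), ⟨hle, rng_tail p.1 e t hpe⟩⟩ := by
      ext f
      simp only [Finset.mem_filter, Finset.mem_univ, true_and, Finset.mem_singleton]
      constructor
      · intro hf
        by_cases hc : f.1.2.length + 1 < n
        · have hf' : (⟨DGraph.Path.cons f.1.1 f.1.2 f.2.2, by simpa using hc⟩ : PathLt G n)
              = p := by
            rw [← hf]
            simp only [DGraph.Eln]
            rw [dif_pos hc]
          have h2 := congrArg (fun z : PathLt G n => z.1.edges) hf'
          simp only [DGraph.Path.cons] at h2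
          rw [hpe] at h2
          have h3 : f.1.1 = e ∧ f.1.2.edges = t := by
            constructor
            · exact (List.cons.injEq _ _ _ _ ▸ h2).1
            · exact (List.cons.injEq _ _ _ _ ▸ h2).2
          have hsrc : f.1.2.src = p.1.src := congrArg (fun z : PathLt G n => z.1.src) hf'
          have h4 : f.1.2 = p.1.tail := by
            refine DGraph.Path.ext'_s15 ?_ ?_
            · exact hsrc
            · simp [DGraph.Path.tail, hpe, h3.2]
          exact Finset.mem_singleton.2 <| Subtype.ext (α := G.E × G.Path)
            (p := fun q => q.2.length + 1 ≤ n ∧ q.2.rng = G.s q.1) (a1 := f)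
            (a2 := ⟨(e, p.1.tail), ⟨hle, rng_tail p.1 e t hpe⟩⟩) (Prod.ext h3.1 h4)
        · exfalso
          have hneg : (Eln G n).r f
              = ⟨DGraph.Path.nil G (G.r f.1.1), Nat.lt_of_lt_of_le (Nat.succ_pos _) f.2.1⟩ := by
            simp only [DGraph.Eln]
            rw [dif_neg hc]
          rw [hneg] at hf
          have h2 := congrArg (fun z : PathLt G n => z.1.edges) hf
          simp [DGraph.Path.nil, hpe] at h2
      · intro hf
        obtain rfl := Finset.mem_singleton.1 hf
        show (Eln G n).r _ = p
        simp only [DGraph.Eln]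
        rw [dif_pos hlt]
        exact Subtype.ext (cons_tail p.1 e t hpe (rng_tail p.1 e t hpe))
    rw [hfilter]; refine (Finset.sum_singleton _ _).trans ?_
    show (1 / (n:ℝ)) * ρ ^ (-(p.1.tail.length : ℤ)) * x p.1.tail.src
        = ρ * ((1 / (n:ℝ)) * ρ ^ (-(p.1.length : ℤ)) * x p.1.src)
    have hsrceq : p.1.tail.src = p.1.src := rfl
    rw [hsrceq, DGraph.Path.length_tail]
    have h1 : ((p.1.length - 1 : ℕ) : ℤ) = (p.1.length : ℤ) - 1 := by omega
    rw [h1, show -((p.1.length:ℤ) - 1) = -(p.1.length:ℤ) + 1 by ring, zpow_add₀ hρ0, zpow_one]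
    ring
  | nil =>
    have hv : p.1.length = 0 := by simp [DGraph.Path.length, hpe]
    have hfilter : Finset.univ.filter (fun f => (Eln G n).r f = p)
        = Finset.univ.filter
            (fun f : (Eln G n).E => f.1.2.length + 1 = n ∧ G.r f.1.1 = p.1.src) := by
      ext f
      simp only [Finset.mem_filter, Finset.mem_univ, true_and]
      constructor
      · intro hf
        by_cases hc : f.1.2.length + 1 < n
        · exfalso
          have hf' : (⟨DGraph.Path.cons f.1.1 f.1.2 f.2.2, by simpa using hc⟩ : PathLt G n)
              = p := by
            rw [← hf]
            simp only [DGraph.Eln]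
            rw [dif_pos hc]
          have h2 := congrArg (fun z : PathLt G n => z.1.edges) hf'
          simp [DGraph.Path.cons, hpe] at h2
        · have hneg : (Eln G n).r f
              = ⟨DGraph.Path.nil G (G.r f.1.1), Nat.lt_of_lt_of_le (Nat.succ_pos _) f.2.1⟩ := by
            simp only [DGraph.Eln]
            rw [dif_neg hc]
          rw [hneg] at hf
          have h2 := congrArg (fun z : PathLt G n => z.1.src) hf
          simp only [DGraph.Path.nil] at h2
          have h1 := f.2.1
          exact ⟨by omega, h2⟩
      · rintro ⟨h1, h2⟩
        have hc : ¬ (f.1.2.length + 1 < n) := by omega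
        have hneg : (Eln G n).r f
            = ⟨DGraph.Path.nil G (G.r f.1.1), Nat.lt_of_lt_of_le (Nat.succ_pos _) f.2.1⟩ := by
          simp only [DGraph.Eln]
          rw [dif_neg hc]
        rw [hneg]
        refine Subtype.ext (DGraph.Path.ext'_s15 ?_ ?_)
        · simpa [DGraph.Path.nil] using h2
        · simp [DGraph.Path.nil, hpe]
    rw [hfilter]
    have hcongr : ∀ f ∈ Finset.univ.filter
          (fun f : (Eln G n).E => f.1.2.length + 1 = n ∧ G.r f.1.1 = p.1.src),
        (1 / (n : ℝ)) * ρ ^ (-(((Eln G n).s f).1.length : ℤ)) * x ((Eln G n).s f).1.src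
          = (1 / (n : ℝ)) * ρ ^ (-((n - 1 : ℕ) : ℤ)) * x f.1.2.src := by
      intro f hf
      have h1 := (Finset.mem_filter.1 hf).2.1
      have h2 : ((Eln G n).s f).1.length = n - 1 := by
        show f.1.2.length = n - 1
        omega
      rw [h2]
      rfl
    rw [Finset.sum_congr rfl hcongr, ← Finset.mul_sum]
    have hsum : ∑ f ∈ Finset.univ.filter
          (fun f : (Eln G n).E => f.1.2.length + 1 = n ∧ G.r f.1.1 = p.1.src),
          x f.1.2.src
        = ∑ z ∈ (Finset.univ.filter (fun e : G.E => G.r e = p.1.src)).sigma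
            (fun e => Finset.univ.filter
              (fun q : PathLt G n => q.1.length = n - 1 ∧ q.1.rng = G.s e)),
          x z.2.1.src := by
      apply Finset.sum_bij'
        (i := fun (f : (Eln G n).E) _ =>
          (⟨f.1.1, ⟨f.1.2, Nat.lt_of_succ_le f.2.1⟩⟩ : Σ _ : G.E, PathLt G n))
        (j := fun z hz =>
          ⟨(z.1, z.2.1),
            ⟨by
              have h1 := (Finset.mem_filter.1 (Finset.mem_sigma.1 hz).2).2.1
              show z.2.1.length + 1 ≤ n
              omega,
            (Finset.mem_filter.1 (Finset.mem_sigma.1 hz).2).2.2⟩⟩)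
      case hi =>
        intro f hf
        obtain ⟨-, h1, h2⟩ := Finset.mem_filter.1 hf
        rw [Finset.mem_sigma]
        refine ⟨by simpa using h2, ?_⟩
        simp only [Finset.mem_filter, Finset.mem_univ, true_and]
        exact ⟨by omega, f.2.2⟩
      case hj =>
        intro z hz
        obtain ⟨hz1, hz2⟩ := Finset.mem_sigma.1 hz
        obtain ⟨-, h1, h2⟩ := Finset.mem_filter.1 hz2
        refine Finset.mem_filter.2 ⟨Finset.mem_univ _, ?_⟩
        exact ⟨by show z.2.1.length + 1 = n; omega,
          by show G.r z.1 = p.1.src; exact (Finset.mem_filter.1 hz1).2⟩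
      case left_neg =>
        intro f hf
        rfl
      case right_neg =>
        intro z hz
        rfl
      case h =>
        intro f hf
        rfl
    rw [hsum, Finset.sum_sigma]
    have hinner : ∀ e ∈ Finset.univ.filter (fun e : G.E => G.r e = p.1.src),
        ∑ q ∈ Finset.univ.filter
            (fun q : PathLt G n => q.1.length = n - 1 ∧ q.1.rng = G.s e),
          x q.1.src = ρ ^ (n - 1) * x (G.s e) :=
      fun e _ => sum_paths G n ρ x heig' (n - 1) (by omega) (G.s e)
    rw [Finset.sum_congr rfl hinner, ← Finset.mul_sum, heig' p.1.src]
    rw [hv]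
    have hzz : ρ ^ (-(((n - 1 : ℕ)) : ℤ)) = (ρ ^ (n - 1))⁻¹ := by
      rw [zpow_neg, zpow_natCast]
    rw [hzz]
    have hpn : ρ ^ (n - 1) ≠ 0 := pow_ne_zero _ hρ0
    simp only [Nat.cast_zero, neg_zero, zpow_zero]
    field_simp
end
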